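/- arXiv:1705.07419 — 3 statements merged into one kernel-verified Lean document; each statement's English description precedes it below -/
import Mathlib

section
/- Let G = K_{n_1,...,n_k} be a complete k-partite graph of order n = n_1 + ... + n_k. Then the characteristic polynomial of the distance Laplacian matrix of G is x(x-n)^{k-1} ∏_{i=1}^k (x - n - n_i)^{n_i - 1}. -/
open Finset Matrix Polynomial SimpleGraph

variable {V : Type*} [Fintype V] [DecidableEq V]

/-- The distance matrix of a graph: entries are graph distances (as reals). -/
noncomputable def distMatrix (G : SimpleGraph V) : Matrix V V ℝ :=
  fun i j => (G.dist i j : ℝ)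

/-- The transmission of a vertex: sum of distances to all vertices. -/
noncomputable def transmission (G : SimpleGraph V) (i : V) : ℝ :=
  ∑ j, (G.dist i j : ℝ)

/-- The distance Laplacian matrix `L(G) = Tr(G) - D(G)`. -/
noncomputable def distLaplacian (G : SimpleGraph V) : Matrix V V ℝ :=
  Matrix.diagonal (transmission G) - distMatrix G

/-- The distance signless Laplacian matrix `Q(G) = Tr(G) + D(G)`. -/
noncomputable def distSignlessLaplacian (G : SimpleGraph V) : Matrix V V ℝ :=
  Matrix.diagonal (transmission G) + distMatrix G

/-- `μ` is an eigenvalue of the matrix `A`. -/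
def IsEigOf (A : Matrix V V ℝ) (μ : ℝ) : Prop :=
  ∃ x : V → ℝ, x ≠ 0 ∧ A.mulVec x = μ • x

/-- Largest eigenvalue (spectral radius for our PSD matrices). -/
noncomputable def maxEig (A : Matrix V V ℝ) : ℝ := sSup {μ : ℝ | IsEigOf A μ}

/-- Smallest eigenvalue. -/
noncomputable def minEig (A : Matrix V V ℝ) : ℝ := sInf {μ : ℝ | IsEigOf A μ}

/-- The Wiener index: half the sum of all pairwise distances. -/
noncomputable def wienerIndex (G : SimpleGraph V) : ℝ :=
  (1 / 2) * ∑ i, ∑ j, (G.dist i j : ℝ)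

lemma aux_eval_charpoly (M : Matrix V V ℝ) (x : ℝ) :
    M.charpoly.eval x = (x • (1 : Matrix V V ℝ) - M).det := by
  rw [Matrix.charpoly]
  have h := RingHom.map_det (Polynomial.evalRingHom x) (charmatrix M)
  have h2 : Polynomial.eval x (charmatrix M).det
      = (Polynomial.evalRingHom x) (charmatrix M).det := rfl
  rw [h2, h]
  congr 1
  ext i j
  by_cases hij : i = j
  · subst hij
    simp [charmatrix_apply_eq, Matrix.one_apply, RingHom.mapMatrix_apply]
  · simp [Matrix.charmatrix_apply_ne M _ _ hij, Matrix.one_apply, hij,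
      RingHom.mapMatrix_apply]

lemma aux_block_det (m : ℕ) (hm : 1 ≤ m) (c : ℝ) (hc : c ≠ 0) :
    (c • (1 : Matrix (Fin m) (Fin m) ℝ) + replicateCol Unit (1 : Fin m → ℝ) * replicateRow Unit (1 : Fin m → ℝ)).det
      = c ^ (m - 1) * (c + m) := by
  have h1 : c • (1 : Matrix (Fin m) (Fin m) ℝ) + replicateCol Unit (1 : Fin m → ℝ) * replicateRow Unit (1 : Fin m → ℝ)
      = c • ((1 : Matrix (Fin m) (Fin m) ℝ) + replicateCol Unit (c⁻¹ • (1 : Fin m → ℝ)) * replicateRow Unit (1 : Fin m → ℝ)) := by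
    rw [smul_add]
    congr 1
    rw [← Matrix.smul_mul, ← Matrix.replicateCol_smul, smul_smul, mul_inv_cancel₀ hc, one_smul]
  rw [h1, Matrix.det_smul, Matrix.det_one_add_replicateCol_mul_replicateRow]
  have hd : (1 : Fin m → ℝ) ⬝ᵥ (c⁻¹ • 1) = m * c⁻¹ := by simp [dotProduct]
  rw [hd, Fintype.card_fin]
  have : c ^ m = c ^ (m - 1) * c := by
    conv_lhs => rw [show m = (m-1)+1 by omega]
    rw [pow_succ]
  rw [this]; field_simp

section Aux
variable {k : ℕ} {nn : Fin k → ℕ}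

lemma myDist (hk : 2 ≤ k) (hnn : ∀ i, 1 ≤ nn i)
    (u v : Σ i : Fin k, Fin (nn i)) :
    ((completeMultipartiteGraph (fun i : Fin k => Fin (nn i))).dist u v : ℝ) =
      if u = v then 0 else if u.1 = v.1 then 2 else 1 := by
  set G := completeMultipartiteGraph (fun i : Fin k => Fin (nn i)) with hG
  by_cases h : u = v
  · simp [h]
  by_cases h2 : u.1 = v.1
  · simp only [h, h2, if_false, if_true]
    haveI : Nontrivial (Fin k) :=
      ⟨⟨⟨0, by omega⟩, ⟨1, by omega⟩, by simp [Fin.ext_iff]⟩⟩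
    obtain ⟨j, hj⟩ := exists_ne u.1
    set w : Σ i : Fin k, Fin (nn i) := ⟨j, ⟨0, hnn j⟩⟩ with hw
    have hadj1 : G.Adj u w := by simp [hG, hw, hj.symm]
    have hadj2 : G.Adj w v := by simp [hG, hw, h2 ▸ hj]
    have hle : G.dist u v ≤ 2 := by
      have := SimpleGraph.dist_le (SimpleGraph.Walk.cons hadj1 hadj2.toWalk)
      simpa using this
    have hne0 : G.dist u v ≠ 0 := by
      rw [ne_eq, SimpleGraph.dist_eq_zero_iff_eq_or_not_reachable]
      push_neg
      exact ⟨h, ⟨SimpleGraph.Walk.cons hadj1 hadj2.toWalk⟩⟩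
    have hne1 : G.dist u v ≠ 1 := by
      rw [ne_eq, SimpleGraph.dist_eq_one_iff_adj]
      simp [hG, h2]
    have : G.dist u v = 2 := by omega
    simp [this]
  · have : G.Adj u v := by simp [hG, h2]
    rw [(SimpleGraph.dist_eq_one_iff_adj).mpr this]
    simp [h, h2]

lemma myTrans (hk : 2 ≤ k) (hnn : ∀ i, 1 ≤ nn i) {n : ℕ} (hn : n = ∑ i, nn i)
    (u : Σ i : Fin k, Fin (nn i)) :
    transmission (completeMultipartiteGraph (fun i : Fin k => Fin (nn i))) u =
      (n : ℝ) + nn u.1 - 2 := by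
  obtain ⟨i, b⟩ := u
  unfold transmission
  rw [← Finset.univ_sigma_univ, Finset.sum_sigma]
  have key : ∀ j : Fin k, ∑ a : Fin (nn j),
      ((completeMultipartiteGraph (fun i : Fin k => Fin (nn i))).dist ⟨i, b⟩ ⟨j, a⟩ : ℝ) =
      (nn j : ℝ) + (if j = i then (nn j : ℝ) - 2 else 0) := by
    intro j
    by_cases hj : j = i
    · subst hj
      simp only [if_true]
      have : ∀ a : Fin (nn j),
          ((completeMultipartiteGraph (fun i : Fin k => Fin (nn i))).dist ⟨j, b⟩ ⟨j, a⟩ : ℝ) =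
          2 - (if a = b then 2 else 0) := by
        intro a
        rw [myDist hk hnn]
        by_cases hab : a = b
        · simp [hab, Sigma.mk.inj_iff]
        · have hba : b ≠ a := fun h => hab h.symm
          simp [hab, hba, Sigma.mk.inj_iff]
      rw [Finset.sum_congr rfl (fun a _ => this a), Finset.sum_sub_distrib,
        Finset.sum_const, Finset.sum_ite_eq' Finset.univ b (fun _ => (2:ℝ))]
      simp; ring
    · have : ∀ a : Fin (nn j),
          ((completeMultipartiteGraph (fun i : Fin k => Fin (nn i))).dist ⟨i, b⟩ ⟨j, a⟩ : ℝ)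
          = 1 := by
        intro a
        rw [myDist hk hnn]
        have h2 : i ≠ j := fun h => hj h.symm
        simp [Sigma.mk.inj_iff, h2, hj]
      rw [Finset.sum_congr rfl (fun a _ => this a)]
      simp [hj]
  rw [Finset.sum_congr rfl (fun j _ => key j), Finset.sum_add_distrib,
    Finset.sum_ite_eq' Finset.univ i (fun j => (nn j : ℝ) - 2)]
  have : ∑ j : Fin k, (nn j : ℝ) = (n : ℝ) := by rw [hn]; push_cast; ring
  simp [this]
  ring

lemma myDetEval (hk : 2 ≤ k) (hnn : ∀ i, 1 ≤ nn i) {n : ℕ} (hn : n = ∑ i, nn i)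
    (x : ℝ) (hx1 : x - n ≠ 0) (hx2 : ∀ i, x - n - nn i ≠ 0) :
    (x • (1 : Matrix (Σ i : Fin k, Fin (nn i)) (Σ i : Fin k, Fin (nn i)) ℝ)
      - distLaplacian (completeMultipartiteGraph (fun i : Fin k => Fin (nn i)))).det =
      x * (x - n) ^ (k - 1) * ∏ i, (x - ((n : ℝ) + nn i)) ^ (nn i - 1) := by
  set G := completeMultipartiteGraph (fun i : Fin k => Fin (nn i)) with hG
  set A : Matrix (Σ i : Fin k, Fin (nn i)) (Σ i : Fin k, Fin (nn i)) ℝ :=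
    Matrix.of (fun u v => if u.1 = v.1 then
      (if u = v then x - n - nn u.1 + 1 else 1) else 0) with hA
  -- step 1: decomposition
  have h1 : x • (1 : Matrix _ _ ℝ) - distLaplacian G = A + replicateCol Unit (1 : (Σ i : Fin k, Fin (nn i)) → ℝ) * replicateRow Unit (1 : (Σ i : Fin k, Fin (nn i)) → ℝ) := by
    ext u v
    have hcr : (replicateCol Unit (1 : (Σ i : Fin k, Fin (nn i)) → ℝ)
        * replicateRow Unit (1 : (Σ i : Fin k, Fin (nn i)) → ℝ)) u v = 1 := by
      simp [Matrix.mul_apply, Matrix.replicateCol, Matrix.replicateRow]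
    simp only [Matrix.sub_apply, Matrix.add_apply, Matrix.smul_apply, hcr]
    rw [distLaplacian]
    simp only [Matrix.sub_apply, Matrix.diagonal_apply, distMatrix]
    rw [myDist hk hnn, myTrans hk hnn hn]
    by_cases h : u = v
    · subst h
      simp [hA, Matrix.one_apply]
      ring
    · by_cases h2 : u.1 = v.1 <;>
        simp [hA, h, h2, Matrix.one_apply] <;> ring
  -- step 2: A is block triangular
  have h2 : BlockTriangular A Sigma.fst := by
    intro u v hlt
    simp only [hA, Matrix.of_apply]
    rw [if_neg (by exact fun h => absurd h.symm (ne_of_lt hlt))]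
  -- step 3: block determinants
  have h3 : ∀ i : Fin k, (A.toSquareBlock Sigma.fst i).det
      = (x - n - nn i) ^ (nn i - 1) * (x - n) := by
    intro i
    let e : Fin (nn i) ≃ {u : Σ j : Fin k, Fin (nn j) // u.1 = i} :=
      { toFun := fun b => ⟨⟨i, b⟩, rfl⟩
        invFun := fun s => Fin.cast (by rw [s.2]) s.1.2
        left_inv := fun b => rfl
        right_inv := by rintro ⟨⟨j, b⟩, h⟩; subst h; rfl }
    rw [← Matrix.det_submatrix_equiv_self e]
    have : (A.toSquareBlock Sigma.fst i).submatrix e e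
        = (x - n - nn i) • (1 : Matrix (Fin (nn i)) (Fin (nn i)) ℝ)
          + replicateCol Unit (1 : Fin (nn i) → ℝ) * replicateRow Unit (1 : Fin (nn i) → ℝ) := by
      ext b c
      have hcr : (replicateCol Unit (1 : Fin (nn i) → ℝ) * replicateRow Unit (1 : Fin (nn i) → ℝ)) b c = 1 := by
        simp [Matrix.mul_apply, Matrix.replicateCol, Matrix.replicateRow]
      simp only [Matrix.submatrix_apply, Matrix.toSquareBlock_def, Matrix.add_apply,
        Matrix.smul_apply, hcr, Matrix.of_apply]
      have he : ∀ b : Fin (nn i), ((e b : {u : Σ j : Fin k, Fin (nn j) // u.1 = i}) :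
          Σ j : Fin k, Fin (nn j)) = ⟨i, b⟩ := fun b => rfl
      rw [he, he]
      by_cases hbc : b = c
      · subst hbc; simp [hA, Matrix.one_apply]
      · have hne : (⟨i, b⟩ : Σ j : Fin k, Fin (nn j)) ≠ ⟨i, c⟩ := by
          simp [Sigma.mk.inj_iff, hbc]
        simp [hA, hne, hbc, Matrix.one_apply]
    rw [this, aux_block_det (nn i) (hnn i) _ (hx2 i)]
    ring
  -- step 4: row sums of A
  have h4 : A *ᵥ (1 : (Σ i : Fin k, Fin (nn i)) → ℝ) = (x - n) • 1 := by
    ext u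
    obtain ⟨i, b⟩ := u
    simp only [Matrix.mulVec, dotProduct, Pi.one_apply, mul_one]
    rw [← Finset.univ_sigma_univ, Finset.sum_sigma]
    have key : ∀ j : Fin k, ∑ a : Fin (nn j), A ⟨i, b⟩ ⟨j, a⟩
        = if j = i then x - n else 0 := by
      intro j
      by_cases hj : j = i
      · subst hj
        simp only [if_true]
        have : ∀ a : Fin (nn j), A ⟨j, b⟩ ⟨j, a⟩
            = 1 + (if a = b then x - n - nn j else 0) := by
          intro a
          by_cases hab : a = b
          · subst hab; simp [hA]; ring
          · have hba : b ≠ a := fun h => hab h.symm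
            simp [hA, Sigma.mk.inj_iff, hab, hba]
        rw [Finset.sum_congr rfl (fun a _ => this a), Finset.sum_add_distrib,
          Finset.sum_const, Finset.sum_ite_eq' Finset.univ b (fun _ => x - n - nn j)]
        simp
        try ring
      · have : ∀ a : Fin (nn j), A ⟨i, b⟩ ⟨j, a⟩ = 0 := by
          intro a
          have h2 : i ≠ j := fun h => hj h.symm
          simp [hA, h2]
        rw [Finset.sum_congr rfl (fun a _ => this a)]
        simp [hj]
    rw [Finset.sum_congr rfl (fun j _ => key j),
      Finset.sum_ite_eq' Finset.univ i (fun _ => x - n)]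
    simp
  -- step 5: matrix determinant lemma
  set w : (Σ i : Fin k, Fin (nn i)) → ℝ := (x - n)⁻¹ • 1 with hwdef
  have h5 : A + replicateCol Unit (1 : (Σ i : Fin k, Fin (nn i)) → ℝ) * replicateRow Unit (1 : (Σ i : Fin k, Fin (nn i)) → ℝ) = A * (1 + replicateCol Unit w * replicateRow Unit (1 : (Σ i : Fin k, Fin (nn i)) → ℝ)) := by
    rw [Matrix.mul_add, Matrix.mul_one, ← Matrix.mul_assoc, ← Matrix.replicateCol_mulVec]
    congr 2
    rw [hwdef, Matrix.mulVec_smul, h4, smul_smul, inv_mul_cancel₀ hx1, one_smul]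
  rw [h1, h5, Matrix.det_mul, Matrix.det_one_add_replicateCol_mul_replicateRow]
  have hdot : (1 : (Σ i : Fin k, Fin (nn i)) → ℝ) ⬝ᵥ w = n * (x - n)⁻¹ := by
    have hcard : Fintype.card (Σ i : Fin k, Fin (nn i)) = n := by
      rw [hn]; simp
    simp [hwdef, dotProduct, Finset.sum_const, Finset.card_univ, hcard]
  rw [hdot, h2.det_fintype]
  rw [Finset.prod_congr rfl (fun i _ => h3 i)]
  rw [Finset.prod_mul_distrib, Finset.prod_const, Finset.card_univ, Fintype.card_fin]
  have hxn : (x - n) ^ k = (x - n) ^ (k - 1) * (x - n) := by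
    conv_lhs => rw [show k = (k-1)+1 by omega]
    rw [pow_succ]
  have : ∀ i, (x - n - nn i) ^ (nn i - 1) = (x - ((n:ℝ) + nn i)) ^ (nn i - 1) := by
    intro i; congr 1; ring
  rw [Finset.prod_congr rfl (fun i _ => this i), hxn]
  field_simp
  ring
end Aux


/-- The distance Laplacian characteristic polynomial of the
complete `k`-partite graph with parts of sizes `nn i` and order
`n = ∑ i, nn i` is `x (x - n)^(k-1) ∏ i (x - n - nn i)^(nn i - 1)`. -/
theorem stmt4 (k : ℕ) (hk : 2 ≤ k) (nn : Fin k → ℕ) (hnn : ∀ i, 1 ≤ nn i)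
    (n : ℕ) (hn : n = ∑ i, nn i) :
    (distLaplacian (completeMultipartiteGraph (fun i : Fin k => Fin (nn i)))).charpoly =
      X * (X - C (n : ℝ)) ^ (k - 1) *
        ∏ i, (X - C ((n : ℝ) + (nn i : ℝ))) ^ (nn i - 1) := by
  apply Polynomial.eq_of_infinite_eval_eq
  refine Set.Infinite.mono ?_ (Set.Ioi_infinite (2 * n : ℝ))
  intro x hx
  simp only [Set.mem_Ioi] at hx
  have hnle : ∀ i, (nn i : ℝ) ≤ n := by
    intro i
    have : nn i ≤ n := hn ▸ Finset.single_le_sum (fun j _ => Nat.zero_le _) (Finset.mem_univ i)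
    exact_mod_cast this
  have hn0 : (0 : ℝ) ≤ n := Nat.cast_nonneg n
  have hx1 : x - n ≠ 0 := by nlinarith
  have hx2 : ∀ i, x - n - nn i ≠ 0 := by
    intro i; have := hnle i; nlinarith
  show _ = _
  rw [aux_eval_charpoly, myDetEval hk hnn hn x hx1 hx2]
  simp [Polynomial.eval_prod]
end

section
/- Let G be a connected graph with n vertices whose maximum vertex transmission is D_1. Then the distance Laplacian spectral radius satisfies ∂_1^L(G) ≥ D_1 + D_1/(n-1). -/
open Finset Matrix Polynomial SimpleGraph

variable {V : Type*} [Fintype V] [DecidableEq V]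

lemma bddAbove_eig (A : Matrix V V ℝ) : BddAbove {μ : ℝ | IsEigOf A μ} := by
  refine ⟨∑ i, ∑ j, |A i j|, ?_⟩
  rintro ν ⟨y, hy0, hy⟩
  obtain ⟨k, hk⟩ := Function.ne_iff.mp hy0
  obtain ⟨j, -, hj⟩ := Finset.exists_max_image Finset.univ (fun i => |y i|) ⟨k, Finset.mem_univ k⟩
  have hyj : 0 < |y j| := lt_of_lt_of_le (abs_pos.mpr hk) (hj k (Finset.mem_univ k))
  have h1 : |ν| * |y j| = |(A *ᵥ y) j| := by rw [hy]; simp [abs_mul]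
  have h2 : |(A *ᵥ y) j| ≤ (∑ l, |A j l|) * |y j| := by
    calc |(A *ᵥ y) j| ≤ ∑ l, |A j l * y l| := Finset.abs_sum_le_sum_abs _ _
      _ = ∑ l, |A j l| * |y l| := by simp [abs_mul]
      _ ≤ ∑ l, |A j l| * |y j| := Finset.sum_le_sum fun l _ =>
          mul_le_mul_of_nonneg_left (hj l (Finset.mem_univ l)) (abs_nonneg _)
      _ = (∑ l, |A j l|) * |y j| := by rw [Finset.sum_mul]
  have h3 : |ν| ≤ ∑ l, |A j l| := by
    have := h1.le.trans h2
    exact le_of_mul_le_mul_right this hyj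
  calc ν ≤ |ν| := le_abs_self ν
    _ ≤ ∑ l, |A j l| := h3
    _ ≤ ∑ i, ∑ l, |A i l| := Finset.single_le_sum (f := fun i => ∑ l, |A i l|)
        (fun i _ => Finset.sum_nonneg fun l _ => abs_nonneg _) (Finset.mem_univ j)

lemma rayleigh_le_maxEig (A : Matrix V V ℝ) (hA : A.IsHermitian) (x : V → ℝ) (hx : x ≠ 0) :
    x ⬝ᵥ (A *ᵥ x) ≤ maxEig A * (x ⬝ᵥ x) := by
  obtain ⟨k, hk⟩ := Function.ne_iff.mp hx
  haveI : Nonempty V := ⟨k⟩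
  -- the largest eigenvalue from the spectral theorem
  obtain ⟨i₀, -, hi₀⟩ := Finset.exists_max_image Finset.univ hA.eigenvalues
    Finset.univ_nonempty
  set μ := hA.eigenvalues i₀ with hμ
  have hμmem : μ ∈ {μ : ℝ | IsEigOf A μ} := by
    refine ⟨⇑(hA.eigenvectorBasis i₀), ?_, hA.mulVec_eigenvectorBasis i₀⟩
    intro h
    exact hA.eigenvectorBasis.orthonormal.ne_zero i₀ (by simpa using h)
  have hμle : μ ≤ maxEig A := le_csSup (bddAbove_eig A) hμmem
  -- diagonalize
  set U : Matrix V V ℝ := (hA.eigenvectorUnitary : Matrix V V ℝ) with hU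
  have hUstar : star U = Uᵀ := by
    ext i j
    simp [Matrix.star_apply]
  set y : V → ℝ := Uᵀ *ᵥ x with hy
  have hdiag : (Matrix.diagonal (RCLike.ofReal ∘ hA.eigenvalues) : Matrix V V ℝ)
      = Matrix.diagonal hA.eigenvalues := by
    congr 1
  have hxAx : x ⬝ᵥ (A *ᵥ x) = y ⬝ᵥ (Matrix.diagonal hA.eigenvalues *ᵥ y) := by
    conv_lhs => rw [hA.spectral_theorem]
    rw [hdiag, Unitary.conjStarAlgAut_apply, ← hU, hUstar, ← Matrix.mulVec_mulVec, ← Matrix.mulVec_mulVec,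
      Matrix.dotProduct_mulVec x U, ← Matrix.mulVec_transpose, ← hy]
  have hUUt : U * Uᵀ = 1 := by
    rw [← hUstar]
    exact (Matrix.mem_unitaryGroup_iff).mp hA.eigenvectorUnitary.2
  have hxx : y ⬝ᵥ y = x ⬝ᵥ x := by
    rw [hy, Matrix.mulVec_transpose, ← Matrix.dotProduct_mulVec, ← Matrix.mulVec_transpose,
      Matrix.mulVec_mulVec, hUUt, Matrix.one_mulVec]
  have hbound : y ⬝ᵥ (Matrix.diagonal hA.eigenvalues *ᵥ y) ≤ μ * (y ⬝ᵥ y) := by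
    rw [dotProduct, dotProduct, Finset.mul_sum]
    refine Finset.sum_le_sum fun i _ => ?_
    rw [Matrix.mulVec_diagonal]
    have h1 : hA.eigenvalues i * (y i * y i) ≤ μ * (y i * y i) :=
      mul_le_mul_of_nonneg_right (hi₀ i (Finset.mem_univ i)) (mul_self_nonneg _)
    nlinarith [h1]
  have hxxnn : 0 ≤ x ⬝ᵥ x := Finset.sum_nonneg fun i _ => mul_self_nonneg _
  calc x ⬝ᵥ (A *ᵥ x) = y ⬝ᵥ (Matrix.diagonal hA.eigenvalues *ᵥ y) := hxAx
    _ ≤ μ * (y ⬝ᵥ y) := hbound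
    _ = μ * (x ⬝ᵥ x) := by rw [hxx]
    _ ≤ maxEig A * (x ⬝ᵥ x) := mul_le_mul_of_nonneg_right hμle hxxnn

lemma distLaplacian_isHermitian (G : SimpleGraph V) : (distLaplacian G).IsHermitian := by
  unfold Matrix.IsHermitian
  ext i j
  simp only [Matrix.conjTranspose_apply, star_trivial, distLaplacian, Matrix.sub_apply,
    distMatrix, Matrix.diagonal_apply]
  rw [SimpleGraph.dist_comm]
  by_cases h : i = j <;> simp [h, eq_comm]

lemma distLaplacian_mulVec_one (G : SimpleGraph V) :
    (distLaplacian G) *ᵥ (fun _ => (1 : ℝ)) = 0 := by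
  funext i
  simp only [distLaplacian, Matrix.mulVec, dotProduct, Matrix.sub_apply,
    Matrix.diagonal_apply, distMatrix, mul_one, Pi.zero_apply]
  rw [Finset.sum_sub_distrib, Finset.sum_ite_eq univ i (fun _ => transmission G i)]
  simp [transmission]

/-- For a connected graph on `n` vertices with maximum
transmission `D₁`, the distance Laplacian spectral radius is at least
`D₁ + D₁/(n-1)`. -/
theorem stmt6 (G : SimpleGraph V) (hG : G.Connected) (n : ℕ)
    (hn : Fintype.card V = n) (D1 : ℝ)
    (hD1 : IsGreatest (Set.range (transmission G)) D1) :
    D1 + D1 / ((n : ℝ) - 1) ≤ maxEig (distLaplacian G) := by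
  obtain ⟨u, hu⟩ := hD1.1
  haveI : Nonempty V := ⟨u⟩
  have hn1 : 1 ≤ n := by
    rw [← hn]
    exact Fintype.card_pos
  set L := distLaplacian G with hL
  rcases eq_or_lt_of_le hn1 with h1 | h2
  · -- n = 1
    have hcard : Fintype.card V = 1 := by omega
    haveI : Subsingleton V := Fintype.card_le_one_iff_subsingleton.mp (by omega)
    have hD0 : D1 = 0 := by
      rw [← hu, transmission]
      refine Finset.sum_eq_zero fun j _ => ?_
      have : j = u := Subsingleton.elim _ _
      simp [this]
    have h0mem : (0 : ℝ) ∈ {μ : ℝ | IsEigOf L μ} := by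
      refine ⟨fun _ => 1, ?_, ?_⟩
      · intro h
        exact one_ne_zero (congrFun h u)
      · rw [distLaplacian_mulVec_one G]
        simp
    have : (0 : ℝ) ≤ maxEig L := le_csSup (bddAbove_eig L) h0mem
    rw [hD0]
    simpa using this
  · -- n ≥ 2
    have hn2 : 2 ≤ n := h2
    have hc : (0 : ℝ) < (n : ℝ) - 1 := by
      have : (2 : ℝ) ≤ (n : ℝ) := by exact_mod_cast hn2
      linarith
    set x : V → ℝ := fun v => if v = u then (n : ℝ) - 1 else -1 with hx
    have hx0 : x ≠ 0 := by
      intro h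
      have := congrFun h u
      simp [hx] at this
      linarith
    -- x = n • e_u - 1
    have hxdec : x = (n : ℝ) • (Pi.single u 1 : V → ℝ) - (fun _ => (1 : ℝ)) := by
      funext v
      by_cases h : v = u <;> simp [hx, h, Pi.single_apply]
    -- L *ᵥ Pi.single u 1 = column u
    have hcol : L *ᵥ Pi.single u 1 = fun i => L i u := by
      rw [Matrix.mulVec_single]
      simp
      rfl
    have hLuu : L u u = D1 := by
      simp [hL, distLaplacian, distMatrix, ← hu]
    have hcolsum : ∑ i, L i u = 0 := by
      simp only [hL, distLaplacian, Matrix.sub_apply, Matrix.diagonal_apply, distMatrix]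
      rw [Finset.sum_sub_distrib, Finset.sum_ite_eq' univ u (transmission G)]
      have : ∑ i, (G.dist i u : ℝ) = transmission G u := by
        rw [transmission]
        exact Finset.sum_congr rfl fun j _ => by rw [SimpleGraph.dist_comm]
      simp [this]
    have hLx : L *ᵥ x = (n : ℝ) • fun i => L i u := by
      rw [hxdec, Matrix.mulVec_sub, Matrix.mulVec_smul, hcol, distLaplacian_mulVec_one G]
      simp
    have hxLx : x ⬝ᵥ (L *ᵥ x) = (n : ℝ) ^ 2 * D1 := by
      rw [hLx, dotProduct_smul, hxdec, sub_dotProduct, smul_dotProduct,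
        single_dotProduct]
      have hone : (fun _ => (1 : ℝ)) ⬝ᵥ (fun i => L i u) = 0 := by
        simpa [dotProduct] using hcolsum
      rw [hone]
      simp [hLuu]
      ring
    have hxx : x ⬝ᵥ x = (n : ℝ) * ((n : ℝ) - 1) := by
      rw [dotProduct, ← Finset.add_sum_erase univ (fun i => x i * x i) (Finset.mem_univ u)]
      have h1 : x u * x u = ((n : ℝ) - 1) ^ 2 := by
        simp only [hx, if_pos rfl]
        ring
      have h2 : ∑ i ∈ univ.erase u, x i * x i = (n : ℝ) - 1 := by
        have hterm : ∀ i ∈ univ.erase u, x i * x i = 1 := by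
          intro i hi
          have hiu : i ≠ u := Finset.ne_of_mem_erase hi
          simp [hx, hiu]
        rw [Finset.sum_congr rfl hterm, Finset.sum_const,
          Finset.card_erase_of_mem (Finset.mem_univ u), Finset.card_univ, hn,
          nsmul_eq_mul, mul_one, Nat.cast_sub hn1, Nat.cast_one]
      rw [h1, h2]
      ring
    have key := rayleigh_le_maxEig L (distLaplacian_isHermitian G) x hx0
    rw [hxLx, hxx] at key
    have hD1nn : 0 ≤ D1 := by
      rw [← hu]
      exact Finset.sum_nonneg fun j _ => by positivity
    have hgoal : D1 + D1 / ((n : ℝ) - 1) = (n : ℝ) * D1 / ((n : ℝ) - 1) := by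
      field_simp
      ring
    rw [hgoal, div_le_iff₀ hc]
    have hnpos : (0 : ℝ) < (n : ℝ) := by positivity
    nlinarith [key]
end

section
/- Let G be a connected graph on n ≥ 2 vertices with transmissions D_1 ≥ D_2 ≥ ... ≥ D_n. Then the smallest distance signless Laplacian eigenvalue satisfies ∂_n^Q(G) < D_n (strict inequality). -/
open Finset Matrix Polynomial SimpleGraph

variable {V : Type*} [Fintype V] [DecidableEq V]

lemma distSL_isHermitian (G : SimpleGraph V) : (distSignlessLaplacian G).IsHermitian := by
  ext i j
  simp only [Matrix.conjTranspose_apply, star_trivial, distSignlessLaplacian, distMatrix,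
    Matrix.add_apply]
  by_cases h : i = j
  · subst h; rfl
  · rw [Matrix.diagonal_apply_ne _ h, Matrix.diagonal_apply_ne _ (Ne.symm h),
      SimpleGraph.dist_comm]

lemma eig_bddBelow (A : Matrix V V ℝ) : BddBelow {μ : ℝ | IsEigOf A μ} := by
  refine ⟨-(∑ k, (‖A k k‖ + ∑ j ∈ Finset.univ.erase k, ‖A k j‖)), ?_⟩
  rintro μ ⟨x, hx, hAx⟩
  have hev : Module.End.HasEigenvalue (Matrix.toLin' A) μ := by
    apply Module.End.hasEigenvalue_of_hasEigenvector (x := x)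
    refine ⟨Module.End.mem_eigenspace_iff.mpr ?_, hx⟩
    simpa [Matrix.toLin'_apply] using hAx
  obtain ⟨k, hk⟩ := eigenvalue_mem_ball hev
  rw [Metric.mem_closedBall, Real.dist_eq] at hk
  have h1 : A k k - (∑ j ∈ Finset.univ.erase k, ‖A k j‖) ≤ μ := by
    have := abs_le.mp hk
    linarith [this.1]
  have h2 : -(‖A k k‖ + ∑ j ∈ Finset.univ.erase k, ‖A k j‖) ≤
      A k k - (∑ j ∈ Finset.univ.erase k, ‖A k j‖) := by
    have := neg_abs_le (A k k)
    simp only [Real.norm_eq_abs]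
    linarith
  have h3 : ∀ k : V, 0 ≤ ‖A k k‖ + ∑ j ∈ Finset.univ.erase k, ‖A k j‖ := fun k =>
    add_nonneg (norm_nonneg _) (Finset.sum_nonneg fun _ _ => norm_nonneg _)
  have h4 : ‖A k k‖ + ∑ j ∈ Finset.univ.erase k, ‖A k j‖ ≤
      ∑ k, (‖A k k‖ + ∑ j ∈ Finset.univ.erase k, ‖A k j‖) :=
    Finset.single_le_sum (fun k _ => h3 k) (Finset.mem_univ k)
  linarith

lemma shift_eig (A : Matrix V V ℝ) (c μ : ℝ) (h : IsEigOf (A - c • (1 : Matrix V V ℝ)) μ) :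
    IsEigOf A (μ + c) := by
  obtain ⟨x, hx, hAx⟩ := h
  refine ⟨x, hx, ?_⟩
  rw [Matrix.sub_mulVec, Matrix.smul_mulVec, Matrix.one_mulVec, sub_eq_iff_eq_add] at hAx
  rw [hAx, add_smul]

/-- For a connected graph on `n ≥ 2` vertices with minimum
transmission `Dₙ`, the smallest distance signless Laplacian eigenvalue is
strictly less than `Dₙ`. -/
theorem stmt17 (G : SimpleGraph V) (hG : G.Connected)
    (hn : 2 ≤ Fintype.card V) (Dn : ℝ)
    (hDn : IsLeast (Set.range (transmission G)) Dn) :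
    minEig (distSignlessLaplacian G) < Dn := by
  set A := distSignlessLaplacian G with hAdef
  obtain ⟨⟨w, hw⟩, hleast⟩ := hDn
  obtain ⟨i, hi⟩ := Fintype.exists_ne_of_one_lt_card (by omega) w
  set B : Matrix V V ℝ := A - Dn • (1 : Matrix V V ℝ) with hBdef
  have hB : B.IsHermitian := by
    apply (distSL_isHermitian G).sub
    simp [Matrix.IsHermitian]
  -- B is not PosSemidef
  have hnotpsd : ¬ B.PosSemidef := by
    intro hpsd
    set a : ℝ := B i i with ha
    set b : ℝ := (G.dist w i : ℝ) with hb
    have hbpos : 0 < b := by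
      have := hG.pos_dist_of_ne (Ne.symm hi)
      rw [hb]
      exact_mod_cast this
    have hanonneg : 0 ≤ a := by
      have : Dn ≤ transmission G i := hleast ⟨i, rfl⟩
      have hBii : B i i = transmission G i - Dn := by
        simp [hBdef, hAdef, distSignlessLaplacian, distMatrix, Matrix.sub_apply,
          Matrix.add_apply, Matrix.diagonal_apply_eq, Matrix.smul_apply, Matrix.one_apply_eq]
      rw [ha, hBii]; linarith
    set t : ℝ := -(b / (a + 1)) with ht
    set x : V → ℝ := Pi.single w (1:ℝ) + t • (Pi.single i (1:ℝ) : V → ℝ) with hx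
    have hquad := hpsd.dotProduct_mulVec_nonneg x
    have hBww : B w w = 0 := by
      simp [hBdef, hAdef, distSignlessLaplacian, distMatrix, Matrix.sub_apply,
        Matrix.add_apply, Matrix.diagonal_apply_eq, Matrix.smul_apply, Matrix.one_apply_eq, hw]
    have hBwi : B w i = b := by
      simp [hBdef, hAdef, distSignlessLaplacian, distMatrix, Matrix.sub_apply,
        Matrix.add_apply, Matrix.diagonal_apply_ne _ (Ne.symm hi),
        Matrix.smul_apply, Matrix.one_apply_ne (Ne.symm hi), hb]
    have hBiw : B i w = b := by
      simp [hBdef, hAdef, distSignlessLaplacian, distMatrix, Matrix.sub_apply,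
        Matrix.add_apply, Matrix.diagonal_apply_ne _ hi,
        Matrix.smul_apply, Matrix.one_apply_ne hi, hb, SimpleGraph.dist_comm]
    have hval : star x ⬝ᵥ B *ᵥ x = 2 * t * b + t ^ 2 * a := by
      have hstar : star x = x := by
        funext k; simp [hx]
      rw [hstar, hx]
      simp only [Matrix.mulVec_add, Matrix.mulVec_smul, Matrix.mulVec_single_one, Matrix.col_apply,
        add_dotProduct, smul_dotProduct, single_dotProduct,
        dotProduct_add, dotProduct_smul, Pi.add_apply, Pi.smul_apply,
        smul_eq_mul, mul_one, one_mul]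
      rw [hBww, hBwi, hBiw]
      ring
    rw [hval] at hquad
    have hlt : 2 * t * b + t ^ 2 * a < 0 := by
      rw [ht]
      have hpos : (0:ℝ) < a + 1 := by linarith
      have : 2 * -(b / (a + 1)) * b + (-(b / (a + 1))) ^ 2 * a
          = -(b ^ 2 * (a + 2)) / (a + 1) ^ 2 := by
        field_simp
        ring
      rw [this]
      apply div_neg_of_neg_of_pos
      · have : 0 < b ^ 2 * (a + 2) := by positivity
        linarith
      · positivity
    linarith
  -- some eigenvalue of B is negative
  have hex : ∃ j, hB.eigenvalues j < 0 := by
    by_contra h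
    push_neg at h
    exact hnotpsd (hB.posSemidef_iff_eigenvalues_nonneg.mpr (fun k => h k))
  obtain ⟨j, hj⟩ := hex
  set μ : ℝ := hB.eigenvalues j + Dn with hμ
  have hμmem : IsEigOf A μ := by
    have hBeig : IsEigOf B (hB.eigenvalues j) := by
      refine ⟨⇑(hB.eigenvectorBasis j), ?_, hB.mulVec_eigenvectorBasis j⟩
      intro hc
      exact hB.eigenvectorBasis.orthonormal.ne_zero j
        ((WithLp.equiv 2 _).injective (by simpa using hc))
    have := shift_eig A Dn _ hBeig
    rwa [hμ]
  have : minEig A ≤ μ := csInf_le (eig_bddBelow A) hμmem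
  linarith
end
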